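/- Let m ≥ 2 be a natural number and let a_n = binom(mn, n)/((m−1)n + 1) ∈ ℚ be the n-th Fuss–Catalan number. Then for every natural number n, a_{n+1} = ∑ a_{i_1}·a_{i_2}···a_{i_m}, where the sum ranges over all m-tuples (i_1, …, i_m) of natural numbers with i_1 + ⋯ + i_m = n. (Fuss's generalization of Segner's recurrence, 1795.) -/

import Mathlib

open Finset Finset.Nat

/-- Auxiliary "generalized Fuss–Catalan" polynomial family:
`fc m n r = r * (mn+r-1)(mn+r-2)⋯(mn+r-(n-1)) / n!`. -/
private def fc (m : ℕ) : ℕ → ℚ → ℚ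
  | 0, _ => 1
  | (n+1), r =>
      r * (∏ i ∈ Finset.range n, ((m : ℚ) * ((n : ℚ) + 1) + r - ((i : ℚ) + 1)))
        / (Nat.factorial (n+1) : ℚ)

private lemma fc_zero_left (m : ℕ) (r : ℚ) : fc m 0 r = 1 := rfl

private lemma fc_succ (m n : ℕ) (r : ℚ) :
    fc m (n+1) r
      = r * (∏ i ∈ Finset.range n, ((m : ℚ) * ((n : ℚ) + 1) + r - ((i : ℚ) + 1)))
        / (Nat.factorial (n+1) : ℚ) := rfl

private lemma fc_zero_right (m n : ℕ) : fc m (n+1) 0 = 0 := by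
  rw [fc_succ]; simp

private lemma fc_pascal (m n : ℕ) (r : ℚ) :
    fc m (n+1) (r+1) = fc m (n+1) r + fc m n (r + m) := by
  cases n with
  | zero =>
      rw [fc_succ, fc_succ, fc_zero_left]
      simp [Nat.factorial]
  | succ k =>
      rw [fc_succ, fc_succ, fc_succ]
      have hfac : (Nat.factorial (k+1+1) : ℚ) = ((k : ℚ) + 2) * (Nat.factorial (k+1) : ℚ) := by
        rw [Nat.factorial_succ]; push_cast; ring
      have h1 : ∏ i ∈ Finset.range (k+1), ((m : ℚ) * ((k:ℚ) + 1 + 1) + (r+1) - ((i:ℚ)+1))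
          = (∏ i ∈ Finset.range k, ((m : ℚ) * ((k:ℚ) + 1 + 1) + r - ((i:ℚ)+1)))
              * ((m : ℚ) * ((k:ℚ) + 1 + 1) + r) := by
        rw [Finset.prod_range_succ']
        congr 1
        · exact Finset.prod_congr rfl fun i _ => by push_cast; ring
        · push_cast; ring
      have h2 : ∏ i ∈ Finset.range (k+1), ((m : ℚ) * ((k:ℚ) + 1 + 1) + r - ((i:ℚ)+1))
          = (∏ i ∈ Finset.range k, ((m : ℚ) * ((k:ℚ) + 1 + 1) + r - ((i:ℚ)+1)))
              * ((m : ℚ) * ((k:ℚ) + 1 + 1) + r - ((k:ℚ)+1)) := by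
        rw [Finset.prod_range_succ]
      have h3 : ∏ i ∈ Finset.range k, ((m : ℚ) * ((k:ℚ) + 1) + (r + m) - ((i:ℚ)+1))
          = ∏ i ∈ Finset.range k, ((m : ℚ) * ((k:ℚ) + 1 + 1) + r - ((i:ℚ)+1)) :=
        Finset.prod_congr rfl fun i _ => by ring
      push_cast
      rw [h1, h2, h3, hfac]
      have hne : (Nat.factorial (k+1) : ℚ) ≠ 0 := by
        exact_mod_cast (Nat.factorial_pos (k+1)).ne'
      field_simp
      ring

/-- The single convolution (Rothe–Hagen style) recurrence. -/
private lemma fc_conv (m : ℕ) : ∀ n r : ℕ,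
    ∑ p ∈ antidiagonal n, fc m p.1 1 * fc m p.2 (r : ℚ) = fc m n ((r : ℚ) + 1) := by
  intro n
  induction n with
  | zero =>
      intro r
      simp [fc_zero_left]
  | succ n ihn =>
      intro r
      induction r with
      | zero =>
          rw [sum_antidiagonal_succ']
          simp [fc_zero_left, fc_zero_right]
      | succ r ihr =>
          have key : ∑ p ∈ antidiagonal (n+1), fc m p.1 1 * fc m p.2 (((r:ℚ)+1))
              = (∑ p ∈ antidiagonal (n+1), fc m p.1 1 * fc m p.2 (r : ℚ))
                + ∑ p ∈ antidiagonal n, fc m p.1 1 * fc m p.2 ((r : ℚ) + m) := by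
            rw [sum_antidiagonal_succ', sum_antidiagonal_succ' (f := fun p =>
              fc m p.1 1 * fc m p.2 (r : ℚ))]
            have : ∀ p : ℕ × ℕ, p ∈ antidiagonal n →
                fc m p.1 1 * fc m (p.2+1) ((r:ℚ)+1)
                  = fc m p.1 1 * fc m (p.2+1) (r:ℚ) + fc m p.1 1 * fc m p.2 ((r:ℚ) + m) := by
              intro p _
              rw [fc_pascal]; ring
            rw [Finset.sum_congr rfl this, Finset.sum_add_distrib]
            rw [fc_zero_left, fc_zero_left]
            ring
          have hcast : ((r:ℚ) + 1) = (((r+1 : ℕ) : ℚ)) := by push_cast; ring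
          have hcast2 : ((r:ℚ) + m) = (((r+m : ℕ) : ℚ)) := by push_cast; ring
          rw [← hcast] at *
          rw [key, ihr, hcast2, ihn (r+m)]
          have := fc_pascal m n ((r:ℚ)+1)
          rw [this]
          push_cast
          ring_nf

/-- Splitting a sum over `antidiagonalTuple (k+1) n`. -/
private lemma sum_antidiagonalTuple_succ {M : Type*} [AddCommMonoid M] (k n : ℕ)
    (f : (Fin (k+1) → ℕ) → M) :
    ∑ t ∈ Finset.Nat.antidiagonalTuple (k+1) n, f t
      = ∑ p ∈ antidiagonal n, ∑ t ∈ Finset.Nat.antidiagonalTuple k p.2, f (Fin.cons p.1 t) := by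
  rw [Finset.sum_sigma']
  refine Finset.sum_nbij' (i := fun t => ⟨(t 0, ∑ i, Fin.tail t i), Fin.tail t⟩)
    (j := fun x => Fin.cons x.1.1 x.2) ?_ ?_ ?_ ?_ ?_
  · intro t ht
    rw [Finset.Nat.mem_antidiagonalTuple] at ht
    rw [Finset.mem_sigma]
    constructor
    · rw [HasAntidiagonal.mem_antidiagonal]
      rw [← ht, Fin.sum_univ_succ]
      rfl
    · rw [Finset.Nat.mem_antidiagonalTuple]
  · intro x hx
    rw [Finset.mem_sigma] at hx
    obtain ⟨h1, h2⟩ := hx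
    rw [HasAntidiagonal.mem_antidiagonal] at h1
    rw [Finset.Nat.mem_antidiagonalTuple] at h2 ⊢
    rw [Fin.sum_univ_succ]
    simp only [Fin.cons_zero, Fin.cons_succ]
    rw [h2, h1]
  · intro t _
    exact Fin.cons_self_tail t
  · intro x hx
    rw [Finset.mem_sigma] at hx
    obtain ⟨h1, h2⟩ := hx
    rw [HasAntidiagonal.mem_antidiagonal] at h1
    rw [Finset.Nat.mem_antidiagonalTuple] at h2
    refine Sigma.ext ?_ ?_
    · simp only [Fin.cons_zero, Fin.tail_cons]
      rw [h2]
    · simp [Fin.tail_cons]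
  · intro t _
    rw [Fin.cons_self_tail]

/-- The `j+1`-fold convolution of the Fuss–Catalan numbers. -/
private lemma fc_tuple (m : ℕ) : ∀ (j n : ℕ),
    ∑ t ∈ Finset.Nat.antidiagonalTuple (j+1) n, ∏ i, fc m (t i) 1 = fc m n ((j : ℚ) + 1) := by
  intro j
  induction j with
  | zero =>
      intro n
      rw [Finset.Nat.antidiagonalTuple_one, Finset.sum_singleton]
      simp
  | succ j ihj =>
      intro n
      rw [sum_antidiagonalTuple_succ]
      have : ∀ p : ℕ × ℕ, p ∈ antidiagonal n →
          (∑ t ∈ Finset.Nat.antidiagonalTuple (j+1) p.2,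
              ∏ i : Fin (j+1+1), fc m ((Fin.cons p.1 t : Fin (j+1+1) → ℕ) i) 1)
            = fc m p.1 1 * fc m p.2 (((j+1 : ℕ)) : ℚ) := by
        intro p _
        have : ∀ t : Fin (j+1) → ℕ, (∏ i : Fin (j+1+1), fc m ((Fin.cons p.1 t : Fin (j+1+1) → ℕ) i) 1)
            = fc m p.1 1 * ∏ i : Fin (j+1), fc m (t i) 1 := by
          intro t
          rw [Fin.prod_univ_succ, Fin.cons_zero]
          simp only [Fin.cons_succ]
        rw [Finset.sum_congr rfl fun t _ => this t, ← Finset.mul_sum, ihj]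
        norm_cast
      rw [Finset.sum_congr rfl this, fc_conv m n (j+1)]

private lemma prod_cast_desc (c : ℕ) : ∀ n : ℕ, n ≤ c →
    ∏ i ∈ Finset.range n, ((c : ℚ) - (i : ℚ))
      = (Nat.factorial c : ℚ) / (Nat.factorial (c - n) : ℚ) := by
  intro n
  induction n with
  | zero =>
      intro _
      simp [div_self, (Nat.factorial_pos c).ne']
  | succ n ihn =>
      intro h
      rw [Finset.prod_range_succ, ihn (by omega)]
      have h1 : c - n = (c - (n+1)) + 1 := by omega
      have key : (Nat.factorial (c - n) : ℚ)
          = ((c : ℚ) - (n : ℚ)) * (Nat.factorial (c - (n+1)) : ℚ) := by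
        rw [h1, Nat.factorial_succ]
        push_cast [Nat.cast_sub (show n + 1 ≤ c by omega)]
        ring
      have hne2 : (Nat.factorial (c - (n+1)) : ℚ) ≠ 0 := by
        exact_mod_cast (Nat.factorial_pos _).ne'
      have hcn : ((c : ℚ) - (n : ℚ)) ≠ 0 := by
        have : (n : ℚ) < (c : ℚ) := by exact_mod_cast (by omega : n < c)
        intro hcontra
        nlinarith
      rw [key]
      field_simp

private lemma fc_one_eq (m : ℕ) (hm : 1 ≤ m) (n : ℕ) :
    fc m n 1 = (Nat.choose (m * n) n : ℚ) / (((m - 1) * n + 1 : ℕ) : ℚ) := by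
  cases n with
  | zero => simp [fc_zero_left]
  | succ k =>
      have hM : k + 1 ≤ m * (k + 1) := Nat.le_mul_of_pos_left _ (by omega)
      have hprod : ∏ i ∈ Finset.range k, ((m : ℚ) * ((k:ℚ) + 1) + 1 - ((i:ℚ)+1))
          = ∏ i ∈ Finset.range k, (((m * (k+1) : ℕ) : ℚ) - (i : ℚ)) :=
        Finset.prod_congr rfl fun i _ => by push_cast; ring
      rw [fc_succ, hprod, prod_cast_desc _ k (by omega), one_mul]
      rw [Nat.cast_choose ℚ hM]
      have hd : (m - 1) * (k+1) + 1 = m * (k+1) - k := by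
        have h1 : (m-1) * (k+1) = m * (k+1) - (k+1) := by
          rw [Nat.sub_mul, one_mul]
        omega
      rw [hd]
      have h3 : m * (k+1) - k = (m * (k+1) - (k+1)) + 1 := by omega
      have hne1 : (Nat.factorial (m * (k+1) - k) : ℚ) ≠ 0 := by
        exact_mod_cast (Nat.factorial_pos _).ne'
      have hne2 : (Nat.factorial (m * (k+1) - (k+1)) : ℚ) ≠ 0 := by
        exact_mod_cast (Nat.factorial_pos _).ne'
      have hne3 : (Nat.factorial (k+1) : ℚ) ≠ 0 := by
        exact_mod_cast (Nat.factorial_pos _).ne'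
      have hne4 : (Nat.factorial (m * (k+1)) : ℚ) ≠ 0 := by
        exact_mod_cast (Nat.factorial_pos _).ne'
      rw [h3, Nat.factorial_succ]
      push_cast
      field_simp

private lemma fc_m_eq (m : ℕ) (hm : 2 ≤ m) (n : ℕ) :
    fc m n (m : ℚ)
      = (Nat.choose (m * (n+1)) (n+1) : ℚ) / (((m - 1) * (n+1) + 1 : ℕ) : ℚ) := by
  cases n with
  | zero =>
      rw [fc_zero_left]
      have h1 : m * 1 = m := by omega
      have h2 : (m - 1) * 1 + 1 = m := by omega
      rw [h1, h2, Nat.choose_one_right]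
      rw [div_self]
      exact_mod_cast (by omega : m ≠ 0)
  | succ k =>
      have hM : k + 2 ≤ m * (k + 2) := Nat.le_mul_of_pos_left _ (by omega)
      have hprod : ∏ i ∈ Finset.range k, ((m : ℚ) * ((k:ℚ) + 1) + m - ((i:ℚ)+1))
          = ∏ i ∈ Finset.range k, (((m * (k+2) - 1 : ℕ) : ℚ) - (i : ℚ)) :=
        Finset.prod_congr rfl fun i _ => by
          rw [Nat.cast_sub (by omega)]
          push_cast
          ring
      rw [fc_succ, hprod, prod_cast_desc _ k (by omega)]
      rw [Nat.cast_choose ℚ hM]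
      have hd : (m - 1) * (k+2) + 1 = m * (k+2) - (k+1) := by
        have h1 : (m-1) * (k+2) = m * (k+2) - (k+2) := by
          rw [Nat.sub_mul, one_mul]
        omega
      rw [hd]
      have e2 : m * (k+2) - 1 - k = (m * (k+2) - (k+2)) + 1 := by omega
      have e3 : m * (k+2) - (k+1) = (m * (k+2) - (k+2)) + 1 := by omega
      have hne1 : (Nat.factorial (m * (k+2) - (k+2)) : ℚ) ≠ 0 := by
        exact_mod_cast (Nat.factorial_pos _).ne'
      have hne3 : (Nat.factorial (k+1) : ℚ) ≠ 0 := by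
        exact_mod_cast (Nat.factorial_pos _).ne'
      rw [e2, e3]
      have hMfac : (Nat.factorial (m * (k+2)) : ℚ)
          = ((m:ℚ) * ((k:ℚ)+2)) * (Nat.factorial (m * (k+2) - 1) : ℚ) := by
        conv_lhs => rw [show m * (k+2) = (m * (k+2) - 1) + 1 from by omega]
        rw [Nat.factorial_succ]
        push_cast [Nat.cast_sub (show 1 ≤ m * (k+2) by omega)]
        ring
      have hxfac : (Nat.factorial ((m * (k+2) - (k+2)) + 1) : ℚ)
          = (((m * (k+2) - (k+2) : ℕ) : ℚ) + 1) * (Nat.factorial (m * (k+2) - (k+2)) : ℚ) := by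
        rw [Nat.factorial_succ]; push_cast; ring
      have hk2 : (Nat.factorial (k+1+1) : ℚ)
          = ((k:ℚ)+2) * (Nat.factorial (k+1) : ℚ) := by
        rw [Nat.factorial_succ]; push_cast; ring
      rw [hMfac, hxfac, hk2,
        show (((m * (k+2) - (k+2) + 1 : ℕ)) : ℚ) = (((m * (k+2) - (k+2) : ℕ)) : ℚ) + 1
          from by push_cast; ring]
      have hne6 : (((m * (k+2) - (k+2) : ℕ) : ℚ) + 1) ≠ 0 := by positivity
      have hne7 : ((k : ℚ) + 2) ≠ 0 := by positivity
      have hne8 : (Nat.factorial (m * (k+2) - 1) : ℚ) ≠ 0 := by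
        exact_mod_cast (Nat.factorial_pos _).ne'
      set x : ℚ := (((m * (k+2) - (k+2) : ℕ)) : ℚ) with hxdef
      set F1 : ℚ := (Nat.factorial (m * (k+2) - (k+2)) : ℚ) with hF1
      set F2 : ℚ := (Nat.factorial (k+1) : ℚ) with hF2
      set F3 : ℚ := (Nat.factorial (m * (k+2) - 1) : ℚ) with hF3
      field_simp

/-- Fuss's generalization of Segner's recurrence (1795): for the Fuss–Catalan
numbers `aₙ = binom(mn, n)/((m−1)n + 1)` with `m ≥ 2`,
`a_{n+1} = ∑_{i₁+⋯+iₘ = n} a_{i₁}·a_{i₂}⋯a_{iₘ}`. -/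
theorem fussCatalan_segner (m : ℕ) (hm : 2 ≤ m)
    (a : ℕ → ℚ) (ha : ∀ n, a n = (Nat.choose (m * n) n : ℚ) / (((m - 1) * n + 1 : ℕ) : ℚ))
    (n : ℕ) :
    a (n + 1) = ∑ t ∈ Finset.Nat.antidiagonalTuple m n, ∏ j : Fin m, a (t j) := by
  have ha' : ∀ k, a k = fc m k 1 := fun k => by rw [ha, fc_one_eq m (by omega) k]
  have hsum : ∑ t ∈ Finset.Nat.antidiagonalTuple m n, ∏ j : Fin m, a (t j)
      = ∑ t ∈ Finset.Nat.antidiagonalTuple m n, ∏ j : Fin m, fc m (t j) 1 := by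
    refine Finset.sum_congr rfl fun t _ => Finset.prod_congr rfl fun j _ => by rw [ha']
  rw [hsum]
  obtain ⟨m', rfl⟩ : ∃ m', m = m' + 1 := ⟨m - 1, by omega⟩
  rw [fc_tuple (m'+1) m' n]
  rw [ha (n+1)]
  rw [show ((m' : ℚ) + 1) = (((m' + 1 : ℕ)) : ℚ) from by push_cast; ring]
  rw [fc_m_eq (m'+1) hm n]
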